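/- Let B be an invertible 2×2 complex matrix, let k ∈ ℂ, let r be a nonnegative integer, let C₁ ≥ 0, and let M be a positive integer with |Im k| ≤ (C₁ + r·log M)/M. Let P = B·diag(e^{ik}, e^{−ik})·B⁻¹ and set C₃ = e^{C₁}·‖B‖·‖B⁻¹‖, where ‖·‖ denotes the operator norm on 2×2 complex matrices induced by the Euclidean norm on ℂ². Then for every natural number n with n ≤ M and every x ∈ ℂ²: (C₃·M^r)⁻¹·‖x‖ ≤ ‖Pⁿ·x‖ ≤ C₃·M^r·‖x‖. -/

import Mathlib

open Complex Matrix

/-- The operator norm of a 2×2 complex matrix, induced by the Euclidean norm on `ℂ²`. -/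
noncomputable def opNorm2 (B : Matrix (Fin 2) (Fin 2) ℂ) : ℝ :=
  ‖LinearMap.toContinuousLinearMap (Matrix.toEuclideanLin B)‖

lemma euclid_mul_apply (A C : Matrix (Fin 2) (Fin 2) ℂ) (x : EuclideanSpace ℂ (Fin 2)) :
    Matrix.toEuclideanLin (A * C) x = Matrix.toEuclideanLin A (Matrix.toEuclideanLin C x) := by
  simp [Matrix.toEuclideanLin_apply, Matrix.mulVec_mulVec]

lemma euclid_one_apply (x : EuclideanSpace ℂ (Fin 2)) :
    Matrix.toEuclideanLin (1 : Matrix (Fin 2) (Fin 2) ℂ) x = x := by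
  rw [Matrix.toEuclideanLin_apply, Matrix.one_mulVec]

lemma euclid_le_op (A : Matrix (Fin 2) (Fin 2) ℂ) (x : EuclideanSpace ℂ (Fin 2)) :
    ‖Matrix.toEuclideanLin A x‖ ≤ opNorm2 A * ‖x‖ := by
  simpa [opNorm2] using (LinearMap.toContinuousLinearMap (Matrix.toEuclideanLin A)).le_opNorm x

lemma diag_bounds (v : Fin 2 → ℂ) (a b : ℝ) (ha : 0 ≤ a)
    (hlo : ∀ i, a ≤ ‖v i‖) (hhi : ∀ i, ‖v i‖ ≤ b) (x : EuclideanSpace ℂ (Fin 2)) :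
    a * ‖x‖ ≤ ‖Matrix.toEuclideanLin (Matrix.diagonal v) x‖ ∧
      ‖Matrix.toEuclideanLin (Matrix.diagonal v) x‖ ≤ b * ‖x‖ := by
  have hb : 0 ≤ b := le_trans (ha.trans (hlo 0)) (hhi 0)
  have happ : ∀ i, (Matrix.toEuclideanLin (Matrix.diagonal v) x) i = v i * x i := by
    intro i
    simp [Matrix.toEuclideanLin_apply, Matrix.mulVec_diagonal]
    fin_cases i <;> simp
  have hnorm : ∀ (y : EuclideanSpace ℂ (Fin 2)), ‖y‖ = Real.sqrt (∑ i, ‖y i‖ ^ 2) := by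
    intro y; rw [EuclideanSpace.norm_eq]
  constructor
  · rw [hnorm, hnorm, ← Real.sqrt_sq ha, ← Real.sqrt_mul (sq_nonneg a)]
    apply Real.sqrt_le_sqrt
    rw [Finset.mul_sum]
    apply Finset.sum_le_sum
    intro i _
    rw [happ i, norm_mul, mul_pow]
    exact mul_le_mul_of_nonneg_right (pow_le_pow_left₀ ha (hlo i) 2) (sq_nonneg _)
  · rw [hnorm, hnorm, ← Real.sqrt_sq hb, ← Real.sqrt_mul (sq_nonneg b)]
    apply Real.sqrt_le_sqrt
    rw [Finset.mul_sum]
    apply Finset.sum_le_sum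
    intro i _
    rw [happ i, norm_mul, mul_pow]
    exact mul_le_mul_of_nonneg_right (pow_le_pow_left₀ (norm_nonneg _) (hhi i) 2) (sq_nonneg _)

/-- Polynomial two-sided bounds for the powers of the symmetrised cell propagation matrix
`P = B diag(e^{ik}, e^{−ik}) B⁻¹` when `|Im k| ≤ (C₁ + r log M)/M`:
for all `n ≤ M` and `x ∈ ℂ²`, `(C₃Mʳ)⁻¹‖x‖ ≤ ‖Pⁿx‖ ≤ C₃Mʳ‖x‖` with
`C₃ = e^{C₁}‖B‖‖B⁻¹‖`. -/
theorem stmt_17 (B : Matrix (Fin 2) (Fin 2) ℂ) (hB : IsUnit B.det)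
    (k : ℂ) (r : ℕ) (C₁ : ℝ) (hC₁ : 0 ≤ C₁) (M : ℕ) (hM : 0 < M)
    (hk : |k.im| ≤ (C₁ + r * Real.log M) / M) :
    ∀ n : ℕ, n ≤ M → ∀ x : EuclideanSpace ℂ (Fin 2),
      (Real.exp C₁ * opNorm2 B * opNorm2 B⁻¹ * (M : ℝ) ^ r)⁻¹ * ‖x‖ ≤
        ‖Matrix.toEuclideanLin
          ((B * Matrix.diagonal ![Complex.exp (Complex.I * k),
              Complex.exp (-(Complex.I * k))] * B⁻¹) ^ n) x‖ ∧
      ‖Matrix.toEuclideanLin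
          ((B * Matrix.diagonal ![Complex.exp (Complex.I * k),
              Complex.exp (-(Complex.I * k))] * B⁻¹) ^ n) x‖ ≤
        Real.exp C₁ * opNorm2 B * opNorm2 B⁻¹ * (M : ℝ) ^ r * ‖x‖ := by
  intro n hn x
  have hMpos : (0:ℝ) < M := by exact_mod_cast hM
  set D : Matrix (Fin 2) (Fin 2) ℂ :=
    Matrix.diagonal ![Complex.exp (Complex.I * k), Complex.exp (-(Complex.I * k))] with hD
  have hBinv : B⁻¹ * B = 1 := Matrix.nonsing_inv_mul B hB
  have hBinv' : B * B⁻¹ = 1 := Matrix.mul_nonsing_inv B hB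
  have hpow : ∀ m : ℕ, (B * D * B⁻¹) ^ m = B * D ^ m * B⁻¹ := by
    intro m
    induction m with
    | zero => simp [hBinv']
    | succ m ih =>
      rw [pow_succ, pow_succ, ih]
      rw [show B * D ^ m * B⁻¹ * (B * D * B⁻¹) = B * D ^ m * (B⁻¹ * B) * D * B⁻¹ by
        noncomm_ring]
      rw [hBinv]; noncomm_ring
  have hvec : (![Complex.exp (Complex.I * k), Complex.exp (-(Complex.I * k))] : Fin 2 → ℂ) ^ n =
      ![Complex.exp (Complex.I * k) ^ n, Complex.exp (-(Complex.I * k)) ^ n] := by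
    funext i; fin_cases i <;> simp
  have hDpow : D ^ n = Matrix.diagonal
      ![Complex.exp (Complex.I * k) ^ n, Complex.exp (-(Complex.I * k)) ^ n] := by
    rw [hD, Matrix.diagonal_pow, hvec]
  set c : ℝ := Real.exp C₁ * (M : ℝ) ^ r with hc
  have hMpow : (M:ℝ) ^ r = Real.exp (r * Real.log M) := by
    rw [Real.exp_nat_mul, Real.exp_log hMpos]
  have hnk : (n:ℝ) * |k.im| ≤ C₁ + r * Real.log M := by
    calc (n:ℝ) * |k.im| ≤ (M:ℝ) * |k.im| := by
          apply mul_le_mul_of_nonneg_right _ (abs_nonneg _); exact_mod_cast hn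
      _ ≤ (M:ℝ) * ((C₁ + r * Real.log M) / M) := mul_le_mul_of_nonneg_left hk hMpos.le
      _ = C₁ + r * Real.log M := by field_simp
  have hcpos : 0 < c := by rw [hc]; positivity
  have hcE : c = Real.exp (C₁ + r * Real.log M) := by
    rw [hc, hMpow, Real.exp_add]
  have key : ∀ s : ℝ, |s| ≤ (n:ℝ) * |k.im| → c⁻¹ ≤ Real.exp s ∧ Real.exp s ≤ c := by
    intro s hs
    have hsc : |s| ≤ C₁ + r * Real.log M := le_trans hs hnk
    have h := abs_le.mp hsc
    constructor
    · rw [hcE, ← Real.exp_neg]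
      exact Real.exp_le_exp.mpr (by linarith [h.1])
    · rw [hcE]
      exact Real.exp_le_exp.mpr (by linarith [h.2])
  have e1 : ‖Complex.exp (Complex.I * k) ^ n‖ = Real.exp ((n:ℝ) * (-k.im)) := by
    rw [norm_pow, Complex.norm_exp, ← Real.exp_nat_mul]
    congr 1
    simp [Complex.mul_re]
  have e2 : ‖Complex.exp (-(Complex.I * k)) ^ n‖ = Real.exp ((n:ℝ) * k.im) := by
    rw [norm_pow, Complex.norm_exp, ← Real.exp_nat_mul]
    congr 1
    simp [Complex.mul_re]
  have hent : ∀ i, c⁻¹ ≤ ‖(![Complex.exp (Complex.I * k) ^ n,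
      Complex.exp (-(Complex.I * k)) ^ n] : Fin 2 → ℂ) i‖ ∧
      ‖(![Complex.exp (Complex.I * k) ^ n,
      Complex.exp (-(Complex.I * k)) ^ n] : Fin 2 → ℂ) i‖ ≤ c := by
    intro i
    fin_cases i
    · show c⁻¹ ≤ ‖Complex.exp (Complex.I * k) ^ n‖ ∧ ‖Complex.exp (Complex.I * k) ^ n‖ ≤ c
      rw [e1]
      exact key _ (le_of_eq (by rw [abs_mul, Nat.abs_cast, abs_neg]))
    · show c⁻¹ ≤ ‖Complex.exp (-(Complex.I * k)) ^ n‖ ∧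
        ‖Complex.exp (-(Complex.I * k)) ^ n‖ ≤ c
      rw [e2]
      exact key _ (le_of_eq (by rw [abs_mul, Nat.abs_cast]))
  have hop1 : 0 ≤ opNorm2 B := norm_nonneg _
  have hop2 : 0 ≤ opNorm2 B⁻¹ := norm_nonneg _
  have hone : (1:ℝ) ≤ opNorm2 B * opNorm2 B⁻¹ := by
    set z : EuclideanSpace ℂ (Fin 2) := EuclideanSpace.single 0 1 with hz
    have hz1 : ‖z‖ = 1 := by simp [hz]
    have h1 : ‖Matrix.toEuclideanLin (B⁻¹ * B) z‖ = 1 := by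
      rw [hBinv, euclid_one_apply, hz1]
    have h2 : ‖Matrix.toEuclideanLin (B⁻¹ * B) z‖ ≤ opNorm2 B⁻¹ * (opNorm2 B * ‖z‖) := by
      rw [euclid_mul_apply]
      calc ‖Matrix.toEuclideanLin B⁻¹ (Matrix.toEuclideanLin B z)‖
          ≤ opNorm2 B⁻¹ * ‖Matrix.toEuclideanLin B z‖ := euclid_le_op _ _
        _ ≤ opNorm2 B⁻¹ * (opNorm2 B * ‖z‖) :=
            mul_le_mul_of_nonneg_left (euclid_le_op _ _) hop2
    rw [h1, hz1, mul_one] at h2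
    linarith [h2]
  have hop1' : 0 < opNorm2 B := by nlinarith
  have hop2' : 0 < opNorm2 B⁻¹ := by nlinarith
  have hDb := diag_bounds _ c⁻¹ c (le_of_lt (inv_pos.mpr hcpos))
      (fun i => (hent i).1) (fun i => (hent i).2)
  set y : EuclideanSpace ℂ (Fin 2) := Matrix.toEuclideanLin B⁻¹ x with hy
  set w : EuclideanSpace ℂ (Fin 2) := Matrix.toEuclideanLin (D ^ n) y with hw
  have happ : Matrix.toEuclideanLin ((B * D * B⁻¹) ^ n) x = Matrix.toEuclideanLin B w := by
    rw [hpow n, euclid_mul_apply, euclid_mul_apply]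
  have hDny := hDb y
  rw [← hDpow, ← hw] at hDny
  have hxy : ‖x‖ ≤ opNorm2 B * ‖y‖ := by
    have hx : Matrix.toEuclideanLin B y = x := by
      rw [hy, ← euclid_mul_apply, hBinv', euclid_one_apply]
    calc ‖x‖ = ‖Matrix.toEuclideanLin B y‖ := by rw [hx]
      _ ≤ opNorm2 B * ‖y‖ := euclid_le_op _ _
  have hyx : ‖y‖ ≤ opNorm2 B⁻¹ * ‖x‖ := euclid_le_op _ _
  have hlow : ‖w‖ ≤ opNorm2 B⁻¹ * ‖Matrix.toEuclideanLin B w‖ := by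
    have hww : Matrix.toEuclideanLin B⁻¹ (Matrix.toEuclideanLin B w) = w := by
      rw [← euclid_mul_apply, hBinv, euclid_one_apply]
    calc ‖w‖ = ‖Matrix.toEuclideanLin B⁻¹ (Matrix.toEuclideanLin B w)‖ := by rw [hww]
      _ ≤ opNorm2 B⁻¹ * ‖Matrix.toEuclideanLin B w‖ := euclid_le_op _ _
  rw [happ]
  constructor
  · rw [inv_mul_le_iff₀ (by positivity)]
    have hyc : ‖y‖ ≤ c * ‖w‖ := by
      calc ‖y‖ = c * (c⁻¹ * ‖y‖) := by field_simp
        _ ≤ c * ‖w‖ := mul_le_mul_of_nonneg_left hDny.1 hcpos.le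
    calc ‖x‖ ≤ opNorm2 B * ‖y‖ := hxy
      _ ≤ opNorm2 B * (c * ‖w‖) := mul_le_mul_of_nonneg_left hyc hop1
      _ ≤ opNorm2 B * (c * (opNorm2 B⁻¹ * ‖Matrix.toEuclideanLin B w‖)) :=
          mul_le_mul_of_nonneg_left (mul_le_mul_of_nonneg_left hlow hcpos.le) hop1
      _ = Real.exp C₁ * opNorm2 B * opNorm2 B⁻¹ * (M:ℝ) ^ r *
            ‖Matrix.toEuclideanLin B w‖ := by rw [hc]; ring
  · calc ‖Matrix.toEuclideanLin B w‖ ≤ opNorm2 B * ‖w‖ := euclid_le_op _ _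
      _ ≤ opNorm2 B * (c * ‖y‖) := mul_le_mul_of_nonneg_left hDny.2 hop1
      _ ≤ opNorm2 B * (c * (opNorm2 B⁻¹ * ‖x‖)) :=
          mul_le_mul_of_nonneg_left (mul_le_mul_of_nonneg_left hyx hcpos.le) hop1
      _ = Real.exp C₁ * opNorm2 B * opNorm2 B⁻¹ * (M:ℝ) ^ r * ‖x‖ := by rw [hc]; ring
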